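/- If a feasible matching d together with payoffs (u,v) satisfies the stability conditions (u_i ≥ Φ̃_{i0}, v_j ≥ Φ̃_{0j}, u_i + v_j ≥ Φ̃_{ij}, with equality on the support of d), then d maximizes the total joint surplus ∑_{ij} d'_{ij} Φ̃_{ij} + ∑_i d'_{i0} Φ̃_{i0} + ∑_j d'_{0j} Φ̃_{0j} over all feasible matchings d', and the optimal value equals ∑_i u_i + ∑_j v_j. -/
import Mathlib


open Finset

/-- If a feasible matching `d` with payoffs `(u, v)` satisfies the stability conditions
(with equality on the support of `d`), then `d` maximizes total joint surplus over all
feasible matchings, and the optimal value equals `∑ᵢ uᵢ + ∑ⱼ vⱼ`. -/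
theorem stable_implies_optimal
    {I J : Type*} [Fintype I] [Fintype J]
    (Φ : I → J → ℝ) (Φm : I → ℝ) (Φw : J → ℝ)
    (d : I → J → ℝ) (dm : I → ℝ) (dw : J → ℝ)
    (u : I → ℝ) (v : J → ℝ)
    (hd : ∀ i j, 0 ≤ d i j) (hdm : ∀ i, 0 ≤ dm i) (hdw : ∀ j, 0 ≤ dw j)
    (hfeasI : ∀ i, ∑ j, d i j + dm i = 1)
    (hfeasJ : ∀ j, ∑ i, d i j + dw j = 1)
    -- stability conditions
    (hum : ∀ i, u i ≥ Φm i) (hvm : ∀ j, v j ≥ Φw j)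
    (huv : ∀ i j, u i + v j ≥ Φ i j)
    (hum' : ∀ i, dm i > 0 → u i = Φm i)
    (hvm' : ∀ j, dw j > 0 → v j = Φw j)
    (huv' : ∀ i j, d i j > 0 → u i + v j = Φ i j) :
    (∀ (d' : I → J → ℝ) (dm' : I → ℝ) (dw' : J → ℝ),
      (∀ i j, 0 ≤ d' i j) → (∀ i, 0 ≤ dm' i) → (∀ j, 0 ≤ dw' j) →
      (∀ i, ∑ j, d' i j + dm' i = 1) → (∀ j, ∑ i, d' i j + dw' j = 1) →
      ∑ i, ∑ j, d' i j * Φ i j + ∑ i, dm' i * Φm i + ∑ j, dw' j * Φw j ≤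
        ∑ i, ∑ j, d i j * Φ i j + ∑ i, dm i * Φm i + ∑ j, dw j * Φw j) ∧
    ∑ i, ∑ j, d i j * Φ i j + ∑ i, dm i * Φm i + ∑ j, dw j * Φw j =
      ∑ i, u i + ∑ j, v j := by
  have key : ∀ (d' : I → J → ℝ) (dm' : I → ℝ) (dw' : J → ℝ),
      (∀ i, ∑ j, d' i j + dm' i = 1) → (∀ j, ∑ i, d' i j + dw' j = 1) →
      ∑ i, ∑ j, d' i j * (u i + v j) + ∑ i, dm' i * u i + ∑ j, dw' j * v j =
        ∑ i, u i + ∑ j, v j := by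
    intro d' dm' dw' hI hJ
    have hA : ∀ i, ∑ j, d' i j * u i + dm' i * u i = u i := by
      intro i; rw [← Finset.sum_mul, ← add_mul, hI i, one_mul]
    have hB : ∀ j, ∑ i, d' i j * v j + dw' j * v j = v j := by
      intro j; rw [← Finset.sum_mul, ← add_mul, hJ j, one_mul]
    calc ∑ i, ∑ j, d' i j * (u i + v j) + ∑ i, dm' i * u i + ∑ j, dw' j * v j
        = (∑ i, (∑ j, d' i j * u i + dm' i * u i))
          + (∑ j, (∑ i, d' i j * v j + dw' j * v j)) := by
          simp only [mul_add, Finset.sum_add_distrib]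
          rw [Finset.sum_comm (f := fun i j => d' i j * v j)]
          ring
      _ = ∑ i, u i + ∑ j, v j := by
          simp only [hA, hB]
  have hopt : ∑ i, ∑ j, d i j * Φ i j + ∑ i, dm i * Φm i + ∑ j, dw j * Φw j =
      ∑ i, u i + ∑ j, v j := by
    rw [← key d dm dw hfeasI hfeasJ]
    congr 1
    · congr 1
      · refine Finset.sum_congr rfl fun i _ => Finset.sum_congr rfl fun j _ => ?_
        rcases eq_or_lt_of_le (hd i j) with h | h
        · rw [← h]; ring
        · rw [huv' i j h]
      · refine Finset.sum_congr rfl fun i _ => ?_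
        rcases eq_or_lt_of_le (hdm i) with h | h
        · rw [← h]; ring
        · rw [hum' i h]
    · refine Finset.sum_congr rfl fun j _ => ?_
      rcases eq_or_lt_of_le (hdw j) with h | h
      · rw [← h]; ring
      · rw [hvm' j h]
  refine ⟨fun d' dm' dw' hd' hdm' hdw' hI' hJ' => ?_, hopt⟩
  rw [hopt, ← key d' dm' dw' hI' hJ']
  refine add_le_add (add_le_add ?_ ?_) ?_
  · exact Finset.sum_le_sum fun i _ => Finset.sum_le_sum fun j _ =>
      mul_le_mul_of_nonneg_left (huv i j) (hd' i j)
  · exact Finset.sum_le_sum fun i _ => mul_le_mul_of_nonneg_left (hum i) (hdm' i)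
  · exact Finset.sum_le_sum fun j _ => mul_le_mul_of_nonneg_left (hvm j) (hdw' j)
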